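/- arXiv:1808.00535 — 2 statements merged into one kernel-verified Lean document; each statement's English description precedes it below -/
import Mathlib

section
/- A set of D pure states {|ψ_j⟩} in a D-dimensional Hilbert space forms an orthonormal basis if and only if their generalized Bloch vectors {b_j} satisfy ∑_j b_j = 0 and b_h · b_k = D/(D-1) δ_{hk} − 1/(D-1). -/
open Matrix

lemma trace_vmv_mul {D : ℕ} (u v x y : Fin D → ℂ) :
    (Matrix.vecMulVec u v * Matrix.vecMulVec x y).trace = (v ⬝ᵥ x) * (y ⬝ᵥ u) := by
  simp only [Matrix.trace, Matrix.diag, Matrix.mul_apply, Matrix.vecMulVec_apply, dotProduct,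
    Finset.sum_mul, Finset.mul_sum]
  apply Finset.sum_congr rfl; intros; apply Finset.sum_congr rfl; intros; ring

/-- A family of `D` pure states in a `D`-dimensional Hilbert space, with generalized Bloch
vectors `b j` (relative to Hermitian traceless generators `γ̂` with `Tr(γ̂ i γ̂ j) = 2δ_{ij}`),
forms an orthonormal basis if and only if `∑ j, b j = 0` and
`b h · b k = D/(D-1) δ_{hk} − 1/(D-1)`. -/
theorem orthonormal_basis_iff_bloch_conditions (D : ℕ) (hD : 2 ≤ D)
    (γhat : Fin (D ^ 2 - 1) → Matrix (Fin D) (Fin D) ℂ)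
    (hherm : ∀ i, (γhat i).IsHermitian)
    (htrace0 : ∀ i, (γhat i).trace = 0)
    (horth : ∀ i j, (γhat i * γhat j).trace = if i = j then 2 else 0)
    (ψ : Fin D → Fin D → ℂ)
    (hψ : ∀ j, ∑ i, ‖ψ j i‖ ^ 2 = 1)
    (b : Fin D → Fin (D ^ 2 - 1) → ℝ)
    (hb : ∀ j, Matrix.vecMulVec (ψ j) (star (ψ j)) =
      ((D : ℂ))⁻¹ • (1 : Matrix (Fin D) (Fin D) ℂ) +
        ((Real.sqrt (((D : ℝ) - 1) / D) : ℝ) : ℂ) •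
          ∑ i, ((b j i : ℝ) : ℂ) • ((((Real.sqrt 2 : ℝ) : ℂ))⁻¹ • γhat i)) :
    (∀ h k : Fin D, star (ψ h) ⬝ᵥ ψ k = if h = k then 1 else 0) ↔
      ((∑ j, b j) = 0 ∧
        ∀ h k : Fin D, ∑ i, b h i * b k i =
          (D : ℝ) / ((D : ℝ) - 1) * (if h = k then 1 else 0) - 1 / ((D : ℝ) - 1)) := by
  have hD2 : (2:ℝ) ≤ (D:ℝ) := by exact_mod_cast hD
  have hD1 : (1:ℝ) ≤ (D:ℝ) - 1 := by linarith
  have hDpos : (0:ℝ) < D := by linarith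
  have hDne' : (D:ℝ) ≠ 0 := by linarith
  have hD1ne : (D:ℝ) - 1 ≠ 0 := by linarith
  have hDne : (D:ℂ) ≠ 0 := by
    simp only [ne_eq, Nat.cast_eq_zero]; omega
  have hfrac_pos : (0:ℝ) < ((D:ℝ)-1)/D := by positivity
  set s : ℂ := ((Real.sqrt 2 : ℝ) : ℂ) with hs_def
  set c : ℂ := ((Real.sqrt (((D : ℝ) - 1) / D) : ℝ) : ℂ) with hc_def
  have hs2 : s * s = 2 := by
    rw [hs_def, ← Complex.ofReal_mul, Real.mul_self_sqrt (by norm_num)]; norm_num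
  have hsne : s ≠ 0 := by
    intro h0; rw [h0] at hs2; norm_num at hs2
  have hsinv : s⁻¹ * (s⁻¹ * 2) = 1 := by
    field_simp
    rw [sq, hs2]
  have hc2 : c * c = ((((D:ℝ)-1)/D : ℝ) : ℂ) := by
    rw [hc_def, ← Complex.ofReal_mul, Real.mul_self_sqrt hfrac_pos.le]
  have hcne : c ≠ 0 := by
    rw [hc_def]
    simp only [ne_eq, Complex.ofReal_eq_zero]
    exact (Real.sqrt_pos.mpr hfrac_pos).ne'
  set M : Fin D → Matrix (Fin D) (Fin D) ℂ :=
    fun j => ∑ i, ((b j i : ℝ) : ℂ) • (s⁻¹ • γhat i) with hM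
  have trM : ∀ j, (M j).trace = 0 := by
    intro j
    simp [hM, Matrix.trace_sum, Matrix.trace_smul, htrace0]
  have trMγ : ∀ j k, (M j * γhat k).trace = (b j k : ℂ) * (s⁻¹ * 2) := by
    intro j k
    rw [hM]
    simp only [Finset.sum_mul, Matrix.trace_sum, Matrix.smul_mul, Matrix.trace_smul,
      smul_eq_mul, horth]
    rw [Finset.sum_eq_single k]
    · simp
    · intro i _ hik; simp [hik]
    · simp
  have trMM : ∀ h k, (M h * M k).trace = ((∑ i, b h i * b k i : ℝ) : ℂ) := by
    intro h k
    have expand : M h * M k = ∑ i, ((b k i : ℝ) : ℂ) • (s⁻¹ • (M h * γhat i)) := by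
      conv_lhs => rw [show M k = ∑ i, ((b k i : ℝ) : ℂ) • (s⁻¹ • γhat i) from by rw [hM]]
      simp only [Finset.mul_sum, Matrix.mul_smul]
    rw [expand]
    simp only [Matrix.trace_sum, Matrix.trace_smul, smul_eq_mul, trMγ]
    push_cast
    apply Finset.sum_congr rfl
    intro i _
    rw [show (b k i:ℂ) * (s⁻¹ * ((b h i:ℂ) * (s⁻¹*2))) = (b h i:ℂ)*(b k i:ℂ)*(s⁻¹*(s⁻¹*2)) from by
      ring, hsinv, mul_one]
  have key : ∀ h k, (star (ψ h) ⬝ᵥ ψ k) * (star (ψ k) ⬝ᵥ ψ h)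
      = (D:ℂ)⁻¹ + ((((D:ℝ)-1)/D : ℝ):ℂ) * ((∑ i, b h i * b k i : ℝ):ℂ) := by
    intro h k
    have tr1 : (1 : Matrix (Fin D) (Fin D) ℂ).trace = (D:ℂ) := by
      simp [Matrix.trace_one]
    have hMfold : ∀ j, (∑ i, ((b j i : ℝ) : ℂ) • (s⁻¹ • γhat i)) = M j := fun _ => rfl
    have htr := trace_vmv_mul (ψ h) (star (ψ h)) (ψ k) (star (ψ k))
    rw [hb h, hb k, hMfold h, hMfold k] at htr
    rw [← htr]
    rw [add_mul, mul_add, mul_add]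
    simp only [Matrix.trace_add, Matrix.smul_mul, Matrix.mul_smul, Matrix.one_mul,
      Matrix.mul_one, Matrix.trace_smul, smul_eq_mul, trM h, trM k, trMM h k, mul_zero,
      smul_smul, tr1]
    rw [← hc2]
    field_simp
    ring
  constructor
  · intro hON
    constructor
    · -- sum of Bloch vectors vanishes
      have hsumP : ∑ j, Matrix.vecMulVec (ψ j) (star (ψ j)) = 1 := by
        set A : Matrix (Fin D) (Fin D) ℂ := Matrix.of ψ with hA
        have h1 : A * Aᴴ = 1 := by
          ext h k
          simp only [Matrix.mul_apply, Matrix.conjTranspose_apply, hA, Matrix.of_apply]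
          have h0 := hON h k
          simp only [dotProduct, Pi.star_apply] at h0
          have hst : ∑ i, ψ h i * star (ψ k i) = star (∑ i, star (ψ h i) * ψ k i) := by
            rw [star_sum]; apply Finset.sum_congr rfl; intros; simp [mul_comm]
          rw [hst, h0]
          by_cases hhk : h = k <;> simp [hhk, Matrix.one_apply]
        have h2 : Aᴴ * A = 1 := mul_eq_one_comm.mp h1
        ext i i'
        have hent := congrFun (congrFun h2 i') i
        simp only [Matrix.mul_apply, Matrix.conjTranspose_apply, hA, Matrix.of_apply] at hent
        simp only [Matrix.sum_apply, Matrix.vecMulVec_apply, Pi.star_apply]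
        rw [show ∑ j, ψ j i * star (ψ j i') = ∑ j, star (ψ j i') * ψ j i from by
          apply Finset.sum_congr rfl; intros; exact mul_comm _ _]
        rw [hent]
        by_cases h : i' = i
        · simp [Matrix.one_apply, h]
        · simp [Matrix.one_apply, h]
          exact fun hc => h hc.symm
      have hsum' : (1 : Matrix (Fin D) (Fin D) ℂ) + c • ∑ j, M j = 1 := by
        have : ∑ j, ((D:ℂ)⁻¹ • (1 : Matrix (Fin D) (Fin D) ℂ) + c • M j) = 1 := by
          conv_rhs => rw [← hsumP]
          exact Finset.sum_congr rfl (fun j _ => (hb j).symm)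
        rw [Finset.sum_add_distrib, Finset.sum_const, Finset.card_univ, Fintype.card_fin,
          ← Nat.cast_smul_eq_nsmul ℂ, smul_smul, mul_inv_cancel₀ hDne, one_smul,
          ← Finset.smul_sum] at this
        exact this
      have hMsum : ∑ j, M j = 0 := by
        have := hsum'
        have h0 : c • ∑ j, M j = 0 := by
          have := congrArg (fun X => X - 1) hsum'
          simpa [add_sub_cancel_left] using this
        rcases smul_eq_zero.mp h0 with h | h
        · exact absurd h hcne
        · exact h
      funext k
      have htr0 : ((∑ j, M j) * γhat k).trace = 0 := by
        rw [hMsum, Matrix.zero_mul, Matrix.trace_zero]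
      rw [Finset.sum_mul, Matrix.trace_sum] at htr0
      simp only [trMγ] at htr0
      rw [← Finset.sum_mul] at htr0
      have hs2ne : s⁻¹ * 2 ≠ 0 := by
        intro h0; rw [h0, mul_zero] at hsinv; norm_num at hsinv
      have hcsum : (∑ j, ((b j k : ℝ):ℂ)) = 0 := by
        rcases mul_eq_zero.mp htr0 with h | h
        · exact h
        · exact absurd h hs2ne
      have : ((∑ j, b j k : ℝ) : ℂ) = 0 := by push_cast; exact hcsum
      have hr : (∑ j, b j k : ℝ) = 0 := by exact_mod_cast this
      simpa [Finset.sum_apply] using hr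
    · intro h k
      have hk := key h k
      rw [hON h k, hON k h] at hk
      by_cases hhk : h = k
      · subst hhk
        simp only [eq_self_iff_true, if_true, mul_one] at hk
        simp only [eq_self_iff_true, if_true]
        have hC : (((D:ℝ)⁻¹ + ((D:ℝ)-1)/D * (∑ i, b h i * b h i) : ℝ):ℂ) = ((1:ℝ):ℂ) := by
          rw [Complex.ofReal_add, Complex.ofReal_mul, Complex.ofReal_inv,
            Complex.ofReal_natCast, ← hk, Complex.ofReal_one]
        have hr : (D:ℝ)⁻¹ + ((D:ℝ)-1)/D * (∑ i, b h i * b h i) = 1 :=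
          Complex.ofReal_inj.mp hC
        have hgoal : (D:ℝ) / ((D:ℝ)-1) * 1 - 1 / ((D:ℝ)-1) = 1 := by
          field_simp
        rw [hgoal]
        have h1' : ((D:ℝ)-1) * (∑ i, b h i * b h i) = ((D:ℝ)-1) * 1 := by
          field_simp at hr
          simp only [sq] at hr
          linarith
        exact mul_left_cancel₀ hD1ne h1'
      · rw [if_neg hhk, if_neg (fun hc => hhk hc.symm), mul_zero] at hk
        rw [if_neg hhk]
        have hC : (((D:ℝ)⁻¹ + ((D:ℝ)-1)/D * (∑ i, b h i * b k i) : ℝ):ℂ) = ((0:ℝ):ℂ) := by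
          rw [Complex.ofReal_add, Complex.ofReal_mul, Complex.ofReal_inv,
            Complex.ofReal_natCast, ← hk, Complex.ofReal_zero]
        have hr : (D:ℝ)⁻¹ + ((D:ℝ)-1)/D * (∑ i, b h i * b k i) = 0 :=
          Complex.ofReal_inj.mp hC
        have hgoal : (D:ℝ) / ((D:ℝ)-1) * 0 - 1 / ((D:ℝ)-1) = -(1/((D:ℝ)-1)) := by
          ring
        rw [hgoal]
        have h1' : ((D:ℝ)-1) * (∑ i, b h i * b k i) = ((D:ℝ)-1) * -(1/((D:ℝ)-1)) := by
          field_simp at hr ⊢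
          linear_combination hr
        exact mul_left_cancel₀ hD1ne h1'
  · rintro ⟨-, hdot⟩
    intro h k
    by_cases hhk : h = k
    · subst hhk
      rw [if_pos rfl]
      have : star (ψ h) ⬝ᵥ ψ h = ((∑ i, ‖ψ h i‖ ^ 2 : ℝ) : ℂ) := by
        simp only [dotProduct, Pi.star_apply]
        push_cast
        apply Finset.sum_congr rfl
        intro i _
        rw [RCLike.star_def, RCLike.conj_mul]
        norm_cast
      rw [this, hψ h]
      norm_num
    · rw [if_neg hhk]
      have hk := key h k
      rw [hdot h k, if_neg hhk] at hk
      have hrhs : (D:ℂ)⁻¹ + ((((D:ℝ)-1)/D : ℝ):ℂ)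
          * (((D:ℝ) / ((D:ℝ) - 1) * 0 - 1 / ((D:ℝ) - 1) : ℝ):ℂ) = 0 := by
        rw [← Complex.ofReal_mul]
        rw [show (D:ℂ)⁻¹ = (((D:ℝ)⁻¹ : ℝ):ℂ) from by push_cast; ring]
        rw [← Complex.ofReal_add, Complex.ofReal_eq_zero]
        field_simp
        ring
      rw [hrhs] at hk
      have hcc : star (ψ k) ⬝ᵥ ψ h = star (star (ψ h) ⬝ᵥ ψ k) := star_dotProduct _ _
      rw [hcc] at hk
      rcases mul_eq_zero.mp hk with h0 | h0
      · exact h0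
      · exact star_eq_zero.mp h0
end

section
/- For any state |φ⟩ in a D-dimensional Hilbert space and any pair of mutually unbiased bases B₁, B₂, the Shannon entropies of the measurement distributions satisfy H_{B₁}(φ) + H_{B₂}(φ) ≥ log D. -/
open Finset Real Complex Complex.HadamardThreeLines


local notation "⟪" x ", " y "⟫" => @inner ℂ _ _ x y

/-- Parseval for a finite orthonormal basis over ℂ. -/
lemma onb_sum_sq_inner {E : Type*} [NormedAddCommGroup E] [InnerProductSpace ℂ E]
    {ι : Type*} [Fintype ι] (b : OrthonormalBasis ι ℂ E) (x : E) :
    ∑ i, ‖⟪b i, x⟫‖ ^ 2 = ‖x‖ ^ 2 := by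
  have h := b.sum_inner_mul_inner x x
  have h2 : ∀ i, ⟪x, b i⟫ * ⟪b i, x⟫ = ((‖⟪b i, x⟫‖ ^ 2 : ℝ) : ℂ) := by
    intro i
    rw [← inner_conj_symm x (b i)]
    rw [Complex.conj_mul']
    norm_cast
  simp_rw [h2] at h
  rw [← Complex.ofReal_sum] at h
  rw [inner_self_eq_norm_sq_to_K (𝕜 := ℂ)] at h
  exact Complex.ofReal_inj.mp (by rw [Complex.ofReal_pow]; exact h)

lemma rpow_bound {r t t₀ t₁ : ℝ} (hr : 0 < r) (h0 : t₀ ≤ t) (h1 : t ≤ t₁) :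
    r ^ t ≤ r ^ t₀ + r ^ t₁ := by
  rcases le_total r 1 with h | h
  · exact le_add_of_le_of_nonneg (Real.rpow_le_rpow_of_exponent_ge hr h h0)
      (Real.rpow_nonneg hr.le _)
  · exact le_add_of_nonneg_of_le (Real.rpow_nonneg hr.le _)
      (Real.rpow_le_rpow_of_exponent_le h h1)

lemma hasDerivAt_log_sum_rpow {ι : Type*} [Fintype ι] (p : ι → ℝ) (h0 : ∀ i, 0 ≤ p i)
    (h1 : ∑ i, p i = 1) :
    HasDerivAt (fun x : ℝ => Real.log (∑ i, p i ^ x)) (∑ i, p i * Real.log (p i)) 1 := by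
  have hS : HasDerivAt (fun x : ℝ => ∑ i, p i ^ x) (∑ i, p i * Real.log (p i)) 1 := by
    refine HasDerivAt.fun_sum fun i _ => ?_
    rcases eq_or_lt_of_le (h0 i) with h | h
    · have heq : (fun x : ℝ => p i ^ x) =ᶠ[nhds (1:ℝ)] fun _ => (0:ℝ) := by
        filter_upwards [eventually_ne_nhds one_ne_zero] with x hx
        rw [← h, Real.zero_rpow hx]
      have : HasDerivAt (fun _ : ℝ => (0:ℝ)) (p i * Real.log (p i)) 1 := by
        rw [show p i * Real.log (p i) = 0 by rw [← h]; ring]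
        exact hasDerivAt_const 1 0
      exact this.congr_of_eventuallyEq heq
    · simpa [Real.rpow_one] using (Real.hasStrictDerivAt_const_rpow h 1).hasDerivAt
  have hS1 : (∑ i, p i ^ (1:ℝ)) = 1 := by simp [Real.rpow_one, h1]
  have := hS.log (by rw [hS1]; norm_num)
  simpa [hS1, h1] using this



set_option maxHeartbeats 1000000 in
lemma mub_interp {ι κ : Type*} [Fintype ι] [Fintype κ]
    (a : ι → ℂ) (b : κ → ℂ) (c : κ → ι → ℂ) (C : ℝ) (hC : 0 < C)
    (hb : ∀ j, b j = ∑ i, c j i * a i)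
    (hc : ∀ j i, ‖c j i‖ ≤ C)
    (hbes : ∀ x : ι → ℂ, ∑ j, ‖∑ i, c j i * x i‖ ^ 2 ≤ ∑ i, ‖x i‖ ^ 2)
    {θ : ℝ} (hθ0 : 0 < θ) (hθ1 : θ < 1) :
    (∑ j, (‖b j‖ ^ 2) ^ (1 / (1 - θ))) ^ ((1 - θ) / 2) ≤
      C ^ θ * (∑ i, (‖a i‖ ^ 2) ^ (1 / (1 + θ))) ^ ((1 + θ) / 2) := by
  classical
  have h1p : (0:ℝ) < 1 + θ := by linarith
  have h1m : (0:ℝ) < 1 - θ := by linarith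
  set α : ℝ := 1 / (1 + θ) with hαdef
  set β : ℝ := 1 / (1 - θ) with hβdef
  have hαpos : 0 < α := by positivity
  have hβpos : 0 < β := by positivity
  have hbj : ∀ j : κ, (‖b j‖ ^ 2) ^ β = ‖b j‖ ^ (2 * β) := by
    intro j
    rw [← Real.rpow_natCast ‖b j‖ 2, ← Real.rpow_mul (norm_nonneg _)]
    norm_num
  have hai : ∀ i : ι, (‖a i‖ ^ 2) ^ α = ‖a i‖ ^ (2 * α) := by
    intro i
    rw [← Real.rpow_natCast ‖a i‖ 2, ← Real.rpow_mul (norm_nonneg _)]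
    norm_num
  simp_rw [hbj, hai]
  set Q : ℝ := ∑ j, ‖b j‖ ^ (2 * β) with hQdef
  set P : ℝ := ∑ i, ‖a i‖ ^ (2 * α) with hPdef
  by_cases hbz : ∀ j, b j = 0
  · have : Q = 0 := by
      rw [hQdef]
      refine Finset.sum_eq_zero fun j _ => ?_
      rw [hbz j, norm_zero, Real.zero_rpow (by positivity)]
    rw [this, Real.zero_rpow (by positivity)]
    positivity
  push_neg at hbz
  obtain ⟨j₀, hj₀⟩ := hbz
  have hQpos : 0 < Q := by
    refine Finset.sum_pos' (fun j _ => Real.rpow_nonneg (norm_nonneg _) _)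
      ⟨j₀, Finset.mem_univ _, Real.rpow_pos_of_pos (norm_pos_iff.mpr hj₀) _⟩
  have haz : ∃ i, a i ≠ 0 := by
    by_contra h
    push_neg at h
    exact hj₀ (by rw [hb j₀]; simp [h])
  obtain ⟨i₀, hi₀⟩ := haz
  have hPpos : 0 < P := by
    refine Finset.sum_pos' (fun i _ => Real.rpow_nonneg (norm_nonneg _) _)
      ⟨i₀, Finset.mem_univ _, Real.rpow_pos_of_pos (norm_pos_iff.mpr hi₀) _⟩
  set sa : Finset ι := Finset.univ.filter (fun i => a i ≠ 0) with hsadef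
  set sb : Finset κ := Finset.univ.filter (fun j => b j ≠ 0) with hsbdef
  have hmema : ∀ i ∈ sa, a i ≠ 0 := fun i hi => (Finset.mem_filter.mp hi).2
  have hmemb : ∀ j ∈ sb, b j ≠ 0 := fun j hj => (Finset.mem_filter.mp hj).2
  have hPres : ∑ i ∈ sa, ‖a i‖ ^ (2 * α) = P := by
    rw [hPdef]
    refine Finset.sum_subset (Finset.subset_univ _) fun i _ hi => ?_
    simp only [hsadef, Finset.mem_filter, Finset.mem_univ, true_and, not_not] at hi
    rw [hi, norm_zero, Real.zero_rpow (by positivity)]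
  have hQres : ∑ j ∈ sb, ‖b j‖ ^ (2 * β) = Q := by
    rw [hQdef]
    refine Finset.sum_subset (Finset.subset_univ _) fun j _ hj => ?_
    simp only [hsbdef, Finset.mem_filter, Finset.mem_univ, true_and, not_not] at hj
    rw [hj, norm_zero, Real.zero_rpow (by positivity)]
  -- the analytic family
  set ea : ℂ → ℂ := fun z => (α : ℂ) * (1 + z) - 1 with headef
  set eb : ℂ → ℂ := fun z => (β : ℂ) * (1 + z) - 1 with hebdef
  set w : κ → ℂ → ℂ := fun j z => (starRingEnd ℂ) (b j) * (‖b j‖ : ℂ) ^ (eb z) with hwdef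
  set x : ι → ℂ → ℂ := fun i z => a i * (‖a i‖ : ℂ) ^ (ea z) with hxdef
  set F : ℂ → ℂ := fun z => ∑ j ∈ sb, (w j z * ∑ i ∈ sa, c j i * x i z) with hFdef
  have hwnorm : ∀ j ∈ sb, ∀ z : ℂ, ‖w j z‖ = ‖b j‖ ^ (β * (1 + z.re)) := by
    intro j hj z
    have hpos : 0 < ‖b j‖ := norm_pos_iff.mpr (hmemb j hj)
    rw [hwdef]
    simp only [norm_mul, RCLike.norm_conj]
    rw [Complex.norm_cpow_eq_rpow_re_of_pos hpos]
    have hre : (eb z).re = β * (1 + z.re) - 1 := by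
      simp [hebdef, Complex.add_re, Complex.ofReal_re]
    rw [hre]
    nth_rewrite 1 [← Real.rpow_one ‖b j‖]
    rw [← Real.rpow_add hpos]
    ring_nf
  have hxnorm : ∀ i ∈ sa, ∀ z : ℂ, ‖x i z‖ = ‖a i‖ ^ (α * (1 + z.re)) := by
    intro i hi z
    have hpos : 0 < ‖a i‖ := norm_pos_iff.mpr (hmema i hi)
    rw [hxdef]
    simp only [norm_mul]
    rw [Complex.norm_cpow_eq_rpow_re_of_pos hpos]
    have hre : (ea z).re = α * (1 + z.re) - 1 := by
      simp [headef, Complex.add_re, Complex.ofReal_re]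
    rw [hre]
    nth_rewrite 1 [← Real.rpow_one ‖a i‖]
    rw [← Real.rpow_add hpos]
    ring_nf
  have hstep : ∀ z : ℂ, ‖F z‖ ≤ ∑ j ∈ sb, ‖w j z‖ * ‖∑ i ∈ sa, c j i * x i z‖ := by
    intro z
    refine (norm_sum_le _ _).trans ?_
    exact le_of_eq (Finset.sum_congr rfl fun j _ => norm_mul _ _)
  -- differentiability
  have hdea : Differentiable ℂ ea := by rw [headef]; fun_prop
  have hdeb : Differentiable ℂ eb := by rw [hebdef]; fun_prop
  have hdiff : Differentiable ℂ F := by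
    rw [hFdef]
    simp only [hwdef, hxdef]
    refine Differentiable.fun_sum fun j hj => ?_
    have hbne : ((‖b j‖ : ℝ) : ℂ) ≠ 0 :=
      Complex.ofReal_ne_zero.mpr (norm_ne_zero_iff.mpr (hmemb j hj))
    refine Differentiable.mul ?_ ?_
    · exact (differentiable_const _).mul (hdeb.const_cpow (Or.inl hbne))
    · refine Differentiable.fun_sum fun i hi => ?_
      have hane : ((‖a i‖ : ℝ) : ℂ) ≠ 0 :=
        Complex.ofReal_ne_zero.mpr (norm_ne_zero_iff.mpr (hmema i hi))
      exact (differentiable_const _).mul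
        ((differentiable_const _).mul (hdea.const_cpow (Or.inl hane)))
  -- global bound on the strip
  set Bj : κ → ℝ := fun j => ‖b j‖ ^ β + ‖b j‖ ^ (2 * β) with hBjdef
  set Ai : ι → ℝ := fun i => ‖a i‖ ^ α + ‖a i‖ ^ (2 * α) with hAidef
  set K : ℝ := ∑ j ∈ sb, Bj j * ∑ i ∈ sa, C * Ai i with hKdef
  have hFbound : ∀ z ∈ verticalClosedStrip 0 1, ‖F z‖ ≤ K := by
    intro z hz
    obtain ⟨hz0, hz1⟩ : (0:ℝ) ≤ z.re ∧ z.re ≤ 1 := hz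
    refine (hstep z).trans ?_
    rw [hKdef]
    refine Finset.sum_le_sum fun j hj => ?_
    have hbpos : 0 < ‖b j‖ := norm_pos_iff.mpr (hmemb j hj)
    have hw : ‖w j z‖ ≤ Bj j := by
      rw [hwnorm j hj z, hBjdef]
      exact rpow_bound hbpos (by nlinarith) (by nlinarith)
    have hg : ‖∑ i ∈ sa, c j i * x i z‖ ≤ ∑ i ∈ sa, C * Ai i := by
      refine (norm_sum_le _ _).trans (Finset.sum_le_sum fun i hi => ?_)
      rw [norm_mul]
      have hapos : 0 < ‖a i‖ := norm_pos_iff.mpr (hmema i hi)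
      have hx : ‖x i z‖ ≤ Ai i := by
        rw [hxnorm i hi z, hAidef]
        exact rpow_bound hapos (by nlinarith) (by nlinarith)
      exact mul_le_mul (hc j i) hx (norm_nonneg _) hC.le
    exact mul_le_mul hw hg (norm_nonneg _) (le_trans (norm_nonneg _) hw)
  have hB : BddAbove ((norm ∘ F) '' verticalClosedStrip 0 1) := by
    refine ⟨K, ?_⟩
    rintro y ⟨z, hz, rfl⟩
    exact hFbound z hz
  -- boundary bound at re = 0
  have hbd0 : ∀ z ∈ Complex.re ⁻¹' {0}, ‖F z‖ ≤ Real.sqrt Q * Real.sqrt P := by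
    intro z hz
    have hz0 : z.re = 0 := hz
    refine (hstep z).trans ?_
    refine (Real.sum_mul_le_sqrt_mul_sqrt _ _ _).trans ?_
    have hsw : ∑ j ∈ sb, ‖w j z‖ ^ 2 = Q := by
      rw [← hQres]
      refine Finset.sum_congr rfl fun j hj => ?_
      rw [hwnorm j hj z, hz0]
      rw [← Real.rpow_natCast (‖b j‖ ^ (β * (1 + 0))) 2, ← Real.rpow_mul (norm_nonneg _)]
      norm_num [mul_comm]
    have hsg : ∑ j ∈ sb, ‖∑ i ∈ sa, c j i * x i z‖ ^ 2 ≤ P := by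
      set x' : ι → ℂ := fun i => if i ∈ sa then x i z else 0 with hx'def
      have hval : ∀ j, ∑ i ∈ sa, c j i * x i z = ∑ i, c j i * x' i := by
        intro j
        have h1 : ∑ i ∈ sa, c j i * x i z = ∑ i ∈ sa, c j i * x' i :=
          Finset.sum_congr rfl fun i hi => by rw [hx'def]; simp only [if_pos hi]
        rw [h1]
        exact Finset.sum_subset (Finset.subset_univ _) fun i _ hi => by
          rw [hx'def]; simp only [if_neg hi, mul_zero]
      calc ∑ j ∈ sb, ‖∑ i ∈ sa, c j i * x i z‖ ^ 2
          ≤ ∑ j, ‖∑ i ∈ sa, c j i * x i z‖ ^ 2 :=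
            Finset.sum_le_sum_of_subset_of_nonneg (Finset.subset_univ _)
              (fun _ _ _ => by positivity)
        _ = ∑ j, ‖∑ i, c j i * x' i‖ ^ 2 := by simp_rw [hval]
        _ ≤ ∑ i, ‖x' i‖ ^ 2 := hbes x'
        _ = ∑ i ∈ sa, ‖x' i‖ ^ 2 :=
            (Finset.sum_subset (Finset.subset_univ _) fun i _ hi => by
              rw [hx'def]; simp only [if_neg hi, norm_zero]; norm_num).symm
        _ = ∑ i ∈ sa, ‖x i z‖ ^ 2 :=
            Finset.sum_congr rfl fun i hi => by rw [hx'def]; simp only [if_pos hi]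
        _ = P := by
            rw [← hPres]
            refine Finset.sum_congr rfl fun i hi => ?_
            rw [hxnorm i hi z, hz0]
            rw [← Real.rpow_natCast (‖a i‖ ^ (α * (1 + 0))) 2,
              ← Real.rpow_mul (norm_nonneg _)]
            norm_num [mul_comm]
    rw [hsw]
    exact mul_le_mul_of_nonneg_left (Real.sqrt_le_sqrt hsg) (Real.sqrt_nonneg _)
  -- boundary bound at re = 1
  have hbd1 : ∀ z ∈ Complex.re ⁻¹' {1}, ‖F z‖ ≤ Q * (C * P) := by
    intro z hz
    have hz1 : z.re = 1 := hz
    refine (hstep z).trans ?_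
    have hgb : ∀ j ∈ sb, ‖∑ i ∈ sa, c j i * x i z‖ ≤ C * P := by
      intro j hj
      refine (norm_sum_le _ _).trans ?_
      have hterm : ∀ i ∈ sa, ‖c j i * x i z‖ ≤ C * ‖a i‖ ^ (2 * α) := by
        intro i hi
        rw [norm_mul, hxnorm i hi z, hz1, show α * (1 + 1) = 2 * α by ring]
        exact mul_le_mul_of_nonneg_right (hc j i) (Real.rpow_nonneg (norm_nonneg _) _)
      refine (Finset.sum_le_sum hterm).trans ?_
      rw [← Finset.mul_sum, hPres]
    calc ∑ j ∈ sb, ‖w j z‖ * ‖∑ i ∈ sa, c j i * x i z‖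
        ≤ ∑ j ∈ sb, ‖b j‖ ^ (2 * β) * (C * P) := by
          refine Finset.sum_le_sum fun j hj => ?_
          rw [hwnorm j hj z, hz1, show β * (1 + 1) = 2 * β by ring]
          exact mul_le_mul_of_nonneg_left (hgb j hj)
            (Real.rpow_nonneg (norm_nonneg _) _)
      _ = Q * (C * P) := by rw [← Finset.sum_mul, hQres]
  -- apply Hadamard three lines
  have hθmem : (θ:ℂ) ∈ verticalClosedStrip 0 1 := by
    simp only [verticalClosedStrip, Set.mem_preimage, Complex.ofReal_re, Set.mem_Icc]
    exact ⟨hθ0.le, hθ1.le⟩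
  have had := norm_le_interp_of_mem_verticalClosedStrip' (f := F) zero_lt_one hθmem hdiff.diffContOnCl hB hbd0 hbd1
  rw [Complex.ofReal_re] at had
  simp only [sub_zero, div_one] at had
  -- compute F θ
  have hne1p : (1:ℂ) + (θ:ℂ) ≠ 0 := by
    intro h
    have : ((1 + θ : ℝ) : ℂ) = 0 := by push_cast; exact h
    exact h1p.ne' (Complex.ofReal_eq_zero.mp this)
  have hne1m : (1:ℂ) - (θ:ℂ) ≠ 0 := by
    intro h
    have : ((1 - θ : ℝ) : ℂ) = 0 := by push_cast; exact h
    exact h1m.ne' (Complex.ofReal_eq_zero.mp this)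
  have hea0 : ea (θ:ℂ) = 0 := by
    rw [headef, hαdef]
    push_cast
    field_simp
    norm_num
  have hexp : (2:ℂ) + eb (θ:ℂ) = ((2 * β : ℝ) : ℂ) := by
    rw [hebdef, hβdef]
    push_cast
    field_simp
    ring
  have hFθ : F (θ:ℂ) = (Q : ℂ) := by
    have hinner : ∀ j, ∑ i ∈ sa, c j i * x i (θ:ℂ) = b j := by
      intro j
      rw [hxdef]
      simp only [hea0, Complex.cpow_zero, mul_one]
      rw [hb j]
      exact Finset.sum_subset (Finset.subset_univ _) fun i _ hi => by
        simp only [hsadef, Finset.mem_filter, Finset.mem_univ, true_and, not_not] at hi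
        rw [hi, mul_zero]
    rw [hFdef]
    simp only [hinner]
    have hterm : ∀ j ∈ sb, w j (θ:ℂ) * b j = ((‖b j‖ ^ (2 * β) : ℝ) : ℂ) := by
      intro j hj
      have hbpos : 0 < ‖b j‖ := norm_pos_iff.mpr (hmemb j hj)
      have hbne : ((‖b j‖:ℝ):ℂ) ≠ 0 := Complex.ofReal_ne_zero.mpr hbpos.ne'
      rw [hwdef]
      have hcb : (starRingEnd ℂ) (b j) * b j = (((‖b j‖:ℝ):ℂ) ^ (2:ℂ)) := by
        rw [mul_comm, Complex.mul_conj, Complex.normSq_eq_norm_sq]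
        rw [show ((2:ℂ)) = ((2:ℕ):ℂ) by norm_num, Complex.cpow_natCast]
        push_cast
        ring
      have h1 : (starRingEnd ℂ) (b j) * (((‖b j‖:ℝ):ℂ) ^ (eb (θ:ℂ))) * b j
          = (((‖b j‖:ℝ):ℂ) ^ (2:ℂ)) * (((‖b j‖:ℝ):ℂ) ^ (eb (θ:ℂ))) := by
        rw [← hcb]; ring
      rw [h1, ← Complex.cpow_add _ _ hbne, hexp]
      exact (Complex.ofReal_cpow (norm_nonneg _) _).symm
    rw [Finset.sum_congr rfl hterm, ← Complex.ofReal_sum, hQres]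
  have hnormFθ : ‖F (θ:ℂ)‖ = Q := by
    rw [hFθ, Complex.norm_real, Real.norm_eq_abs, abs_of_pos hQpos]
  rw [hnormFθ] at had
  -- conclude by taking logarithms
  have hM0pos : 0 < Real.sqrt Q * Real.sqrt P :=
    mul_pos (Real.sqrt_pos.mpr hQpos) (Real.sqrt_pos.mpr hPpos)
  have hM1pos : 0 < Q * (C * P) := mul_pos hQpos (mul_pos hC hPpos)
  have hR1 : 0 < (Real.sqrt Q * Real.sqrt P) ^ (1 - θ) := Real.rpow_pos_of_pos hM0pos _
  have hR2 : 0 < (Q * (C * P)) ^ θ := Real.rpow_pos_of_pos hM1pos _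
  have hlog := (Real.log_le_log_iff hQpos (mul_pos hR1 hR2)).mpr had
  have e1 : Real.log ((Real.sqrt Q * Real.sqrt P) ^ (1 - θ) * (Q * (C * P)) ^ θ)
      = (1 - θ) * (Real.log Q / 2 + Real.log P / 2)
        + θ * (Real.log Q + (Real.log C + Real.log P)) := by
    rw [Real.log_mul hR1.ne' hR2.ne',
      Real.log_rpow hM0pos, Real.log_rpow hM1pos,
      Real.log_mul (Real.sqrt_pos.mpr hQpos).ne' (Real.sqrt_pos.mpr hPpos).ne',
      Real.log_mul hQpos.ne' (mul_pos hC hPpos).ne',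
      Real.log_mul hC.ne' hPpos.ne',
      Real.log_sqrt hQpos.le, Real.log_sqrt hPpos.le]
  rw [e1] at hlog
  have hG1 : 0 < Q ^ ((1 - θ) / 2) := Real.rpow_pos_of_pos hQpos _
  have hG2 : 0 < C ^ θ * P ^ ((1 + θ) / 2) :=
    mul_pos (Real.rpow_pos_of_pos hC _) (Real.rpow_pos_of_pos hPpos _)
  rw [← Real.log_le_log_iff hG1 hG2,
    Real.log_rpow hQpos, Real.log_mul (Real.rpow_pos_of_pos hC _).ne'
      (Real.rpow_pos_of_pos hPpos _).ne',
    Real.log_rpow hC, Real.log_rpow hPpos]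
  nlinarith [hlog]

set_option maxHeartbeats 1000000 in
/-- Maassen–Uffink entropic uncertainty relation for mutually unbiased bases: for any unit
vector `φ` in a `D`-dimensional Hilbert space and any two mutually unbiased orthonormal bases
`u`, `v`, the Shannon entropies of the two Born-rule measurement distributions satisfy
`H_u(φ) + H_v(φ) ≥ log D`. -/
theorem entropic_uncertainty_mub (D : ℕ) (hD : 0 < D)
    (u v : Fin D → EuclideanSpace ℂ (Fin D))
    (hu : Orthonormal ℂ u) (hv : Orthonormal ℂ v)
    (huspan : Submodule.span ℂ (Set.range u) = ⊤)
    (hvspan : Submodule.span ℂ (Set.range v) = ⊤)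
    (hmub : ∀ i j, ‖(inner ℂ (u i) (v j) : ℂ)‖ ^ 2 = 1 / D)
    (φ : EuclideanSpace ℂ (Fin D)) (hφ : ‖φ‖ = 1) :
    Real.log D ≤
      (-∑ i, ‖(inner ℂ (u i) φ : ℂ)‖ ^ 2 * Real.log (‖(inner ℂ (u i) φ : ℂ)‖ ^ 2)) +
      (-∑ j, ‖(inner ℂ (v j) φ : ℂ)‖ ^ 2 * Real.log (‖(inner ℂ (v j) φ : ℂ)‖ ^ 2)) := by
  classical
  have hD' : (0:ℝ) < D := by exact_mod_cast hD
  let ub : OrthonormalBasis (Fin D) ℂ (EuclideanSpace ℂ (Fin D)) :=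
    OrthonormalBasis.mk hu (by rw [huspan])
  let vb : OrthonormalBasis (Fin D) ℂ (EuclideanSpace ℂ (Fin D)) :=
    OrthonormalBasis.mk hv (by rw [hvspan])
  have hubi : ∀ i, ub i = u i := fun i => by
    simp [ub, OrthonormalBasis.coe_mk]
  have hvbi : ∀ j, vb j = v j := fun j => by
    simp [vb, OrthonormalBasis.coe_mk]
  -- expansion of φ into coefficients
  have hbexp : ∀ j, (inner ℂ (v j) φ : ℂ) =
      ∑ i, (inner ℂ (v j) (u i) : ℂ) * (inner ℂ (u i) φ : ℂ) := by
    intro j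
    have := ub.sum_inner_mul_inner (v j) φ
    simp_rw [hubi] at this
    exact this.symm
  -- overlap bound
  set C : ℝ := Real.sqrt ((D:ℝ)⁻¹) with hCdef
  have hCpos : 0 < C := Real.sqrt_pos.mpr (by positivity)
  have hcbound : ∀ (j i : Fin D), ‖(inner ℂ (v j) (u i) : ℂ)‖ ≤ C := by
    intro j i
    have h1 : ‖(inner ℂ (v j) (u i) : ℂ)‖ = ‖(inner ℂ (u i) (v j) : ℂ)‖ := norm_inner_symm _ _
    have h2 : ‖(inner ℂ (u i) (v j) : ℂ)‖ ^ 2 = (D:ℝ)⁻¹ := by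
      rw [hmub i j]; rw [one_div]
    have h3 : ‖(inner ℂ (v j) (u i) : ℂ)‖ = Real.sqrt ((D:ℝ)⁻¹) := by
      rw [h1, ← h2, Real.sqrt_sq (norm_nonneg _)]
    rw [h3, hCdef]
  -- Bessel / Parseval estimate
  have hbes : ∀ x : Fin D → ℂ,
      ∑ j, ‖∑ i, (inner ℂ (v j) (u i) : ℂ) * x i‖ ^ 2 ≤ ∑ i, ‖x i‖ ^ 2 := by
    intro x
    set Φ : EuclideanSpace ℂ (Fin D) := ∑ i, x i • u i with hΦdef
    have h1 : ∀ j, ∑ i, (inner ℂ (v j) (u i) : ℂ) * x i = (inner ℂ (v j) Φ : ℂ) := by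
      intro j
      rw [hΦdef, inner_sum]
      refine Finset.sum_congr rfl fun i _ => ?_
      rw [inner_smul_right]
      ring
    have h2 : ∑ j, ‖(inner ℂ (v j) Φ : ℂ)‖ ^ 2 = ‖Φ‖ ^ 2 := by
      have := onb_sum_sq_inner vb Φ
      simp_rw [hvbi] at this
      exact this
    have h3 : ‖Φ‖ ^ 2 = ∑ i, ‖x i‖ ^ 2 := by
      have h4 := onb_sum_sq_inner ub Φ
      simp_rw [hubi] at h4
      have h5 : ∀ i, (inner ℂ (u i) Φ : ℂ) = x i := fun i => hu.inner_right_fintype x i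
      simp_rw [h5] at h4
      exact h4.symm
    simp_rw [h1, h2, h3]
    exact le_refl _
  -- the two Born probability distributions
  have hp0 : ∀ i, (0:ℝ) ≤ ‖(inner ℂ (u i) φ : ℂ)‖ ^ 2 := fun i => by positivity
  have hq0 : ∀ j, (0:ℝ) ≤ ‖(inner ℂ (v j) φ : ℂ)‖ ^ 2 := fun j => by positivity
  have hp1 : ∑ i, ‖(inner ℂ (u i) φ : ℂ)‖ ^ 2 = 1 := by
    have := onb_sum_sq_inner ub φ
    simp_rw [hubi] at this
    rw [this, hφ, one_pow]
  have hq1 : ∑ j, ‖(inner ℂ (v j) φ : ℂ)‖ ^ 2 = 1 := by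
    have := onb_sum_sq_inner vb φ
    simp_rw [hvbi] at this
    rw [this, hφ, one_pow]
  -- the log-sum functions
  set fp : ℝ → ℝ := fun t => Real.log (∑ i, (‖(inner ℂ (u i) φ : ℂ)‖ ^ 2) ^ t) with hfpdef
  set fq : ℝ → ℝ := fun t => Real.log (∑ j, (‖(inner ℂ (v j) φ : ℂ)‖ ^ 2) ^ t) with hfqdef
  have hfp1 : fp 1 = 0 := by
    rw [hfpdef]
    simp only [Real.rpow_one]
    rw [hp1, Real.log_one]
  have hfq1 : fq 1 = 0 := by
    rw [hfqdef]
    simp only [Real.rpow_one]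
    rw [hq1, Real.log_one]
  have hdp : HasDerivAt fp
      (∑ i, ‖(inner ℂ (u i) φ : ℂ)‖ ^ 2 * Real.log (‖(inner ℂ (u i) φ : ℂ)‖ ^ 2)) 1 :=
    hasDerivAt_log_sum_rpow _ hp0 hp1
  have hdq : HasDerivAt fq
      (∑ j, ‖(inner ℂ (v j) φ : ℂ)‖ ^ 2 * Real.log (‖(inner ℂ (v j) φ : ℂ)‖ ^ 2)) 1 :=
    hasDerivAt_log_sum_rpow _ hq0 hq1
  -- key inequality for each θ ∈ (0,1)
  have hev : ∀ θ : ℝ, θ ∈ Set.Ioo (0:ℝ) 1 →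
      Real.log D ≤ -slope fp 1 (1/(1+θ)) - slope fq 1 (1/(1-θ)) := by
    intro θ hθ
    obtain ⟨hθ0, hθ1⟩ := hθ
    have h1p : (0:ℝ) < 1 + θ := by linarith
    have h1m : (0:ℝ) < 1 - θ := by linarith
    have hkey := mub_interp (fun i => (inner ℂ (u i) φ : ℂ)) (fun j => (inner ℂ (v j) φ : ℂ))
      (fun j i => (inner ℂ (v j) (u i) : ℂ)) C hCpos hbexp hcbound hbes hθ0 hθ1
    -- positivity of the two sums
    have hqex : ∃ j, ‖(inner ℂ (v j) φ : ℂ)‖ ^ 2 ≠ 0 := by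
      by_contra h
      push_neg at h
      rw [Finset.sum_eq_zero (fun j _ => h j)] at hq1
      norm_num at hq1
    have hpex : ∃ i, ‖(inner ℂ (u i) φ : ℂ)‖ ^ 2 ≠ 0 := by
      by_contra h
      push_neg at h
      rw [Finset.sum_eq_zero (fun i _ => h i)] at hp1
      norm_num at hp1
    obtain ⟨j₀, hj₀⟩ := hqex
    obtain ⟨i₀, hi₀⟩ := hpex
    have hQpos : 0 < ∑ j, (‖(inner ℂ (v j) φ : ℂ)‖ ^ 2) ^ (1/(1-θ)) := by
      refine Finset.sum_pos' (fun j _ => Real.rpow_nonneg (hq0 j) _)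
        ⟨j₀, Finset.mem_univ _, Real.rpow_pos_of_pos (lt_of_le_of_ne (hq0 j₀) (Ne.symm hj₀)) _⟩
    have hPpos : 0 < ∑ i, (‖(inner ℂ (u i) φ : ℂ)‖ ^ 2) ^ (1/(1+θ)) := by
      refine Finset.sum_pos' (fun i _ => Real.rpow_nonneg (hp0 i) _)
        ⟨i₀, Finset.mem_univ _, Real.rpow_pos_of_pos (lt_of_le_of_ne (hp0 i₀) (Ne.symm hi₀)) _⟩
    -- take logs in hkey
    have hG1 : 0 < (∑ j, (‖(inner ℂ (v j) φ : ℂ)‖ ^ 2) ^ (1/(1-θ))) ^ ((1-θ)/2) :=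
      Real.rpow_pos_of_pos hQpos _
    have hG2 : 0 < C ^ θ * (∑ i, (‖(inner ℂ (u i) φ : ℂ)‖ ^ 2) ^ (1/(1+θ))) ^ ((1+θ)/2) :=
      mul_pos (Real.rpow_pos_of_pos hCpos _) (Real.rpow_pos_of_pos hPpos _)
    have hlog := (Real.log_le_log_iff hG1 hG2).mpr hkey
    rw [Real.log_rpow hQpos, Real.log_mul (Real.rpow_pos_of_pos hCpos _).ne'
        (Real.rpow_pos_of_pos hPpos _).ne', Real.log_rpow hCpos,
      Real.log_rpow hPpos] at hlog
    have hlogC : Real.log C = -(Real.log D) / 2 := by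
      rw [hCdef, Real.log_sqrt (by positivity), Real.log_inv]
    rw [hlogC] at hlog
    -- rewrite the slopes
    rw [slope_def_field, slope_def_field, hfp1, hfq1]
    have hfpv : fp (1/(1+θ)) = Real.log (∑ i, (‖(inner ℂ (u i) φ : ℂ)‖ ^ 2) ^ (1/(1+θ))) := rfl
    have hfqv : fq (1/(1-θ)) = Real.log (∑ j, (‖(inner ℂ (v j) φ : ℂ)‖ ^ 2) ^ (1/(1-θ))) := rfl
    rw [hfpv, hfqv]
    set lP : ℝ := Real.log (∑ i, (‖(inner ℂ (u i) φ : ℂ)‖ ^ 2) ^ (1/(1+θ))) with hlPdef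
    set lQ : ℝ := Real.log (∑ j, (‖(inner ℂ (v j) φ : ℂ)‖ ^ 2) ^ (1/(1-θ))) with hlQdef
    have hXeq : -((lP - 0) / (1/(1+θ) - 1)) - (lQ - 0) / (1/(1-θ) - 1)
        = ((1+θ) * lP - (1-θ) * lQ) / θ := by
      have hθne : θ ≠ 0 := hθ0.ne'
      field_simp
      linear_combination (lP + θ * lP + θ * lQ - lQ) * mul_inv_cancel₀ hθne
    rw [hXeq, le_div_iff₀ hθ0]
    nlinarith [hlog]
  -- pass to the limit θ → 0⁺
  have htp := hasDerivAt_iff_tendsto_slope.mp hdp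
  have htq := hasDerivAt_iff_tendsto_slope.mp hdq
  have hαt : Filter.Tendsto (fun θ : ℝ => 1/(1+θ)) (nhdsWithin 0 (Set.Ioi 0))
      (nhdsWithin 1 {x | x ≠ 1}) := by
    rw [tendsto_nhdsWithin_iff]
    constructor
    · have hcont : Filter.Tendsto (fun θ : ℝ => 1/(1+θ)) (nhds 0) (nhds (1/(1+0))) := by
        apply Filter.Tendsto.div tendsto_const_nhds
        · exact (continuous_const.add continuous_id).tendsto 0
        · norm_num
      rw [show (1:ℝ)/(1+0) = 1 by norm_num] at hcont
      exact hcont.mono_left nhdsWithin_le_nhds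
    · filter_upwards [self_mem_nhdsWithin] with θ hθ
      have hθ0 : (0:ℝ) < θ := hθ
      have : (1:ℝ)/(1+θ) < 1 := by
        rw [div_lt_one (by linarith)]
        linarith
      exact ne_of_lt this
  have hβt : Filter.Tendsto (fun θ : ℝ => 1/(1-θ)) (nhdsWithin 0 (Set.Ioi 0))
      (nhdsWithin 1 {x | x ≠ 1}) := by
    rw [tendsto_nhdsWithin_iff]
    constructor
    · have hcont : Filter.Tendsto (fun θ : ℝ => 1/(1-θ)) (nhds 0) (nhds (1/(1-0))) := by
        apply Filter.Tendsto.div tendsto_const_nhds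
        · exact (continuous_const.sub continuous_id).tendsto 0
        · norm_num
      rw [show (1:ℝ)/(1-0) = 1 by norm_num] at hcont
      exact hcont.mono_left nhdsWithin_le_nhds
    · filter_upwards [Ioo_mem_nhdsGT_of_mem
        (show (0:ℝ) ∈ Set.Ico (0:ℝ) 1 by constructor <;> norm_num)] with θ hθ
      obtain ⟨hθ0, hθ1⟩ := hθ
      have : (1:ℝ) < 1/(1-θ) := by
        rw [lt_div_iff₀ (by linarith)]
        linarith
      exact ne_of_gt this
  have hT := ((htp.comp hαt).neg).sub (htq.comp hβt)
  have hfin := ge_of_tendsto hT (by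
    filter_upwards [Ioo_mem_nhdsGT_of_mem
      (show (0:ℝ) ∈ Set.Ico (0:ℝ) 1 by constructor <;> norm_num)] with θ hθ
    exact hev θ hθ)
  calc Real.log D ≤ _ := hfin
    _ = _ := by ring
end
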